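/- arXiv:quant-ph/0406139 — 2 statements merged into one kernel-verified Lean document; each statement's English description precedes it below -/
import Mathlib

section
/- Let ρ be a density matrix on ℂ^{d₁}⊗ℂ^{d₂}, T a nonzero source-operator of type T₁₂₂ for ρ with σ_T = tr^{(1)}[|T|]/‖T‖₁, and S a nonzero source-operator of type T₁₁₂ for ρ with σ_S = tr^{(3)}[|S|]/‖S‖₁. Then for all Hermitian matrices A on ℂ^{d₁} and B on ℂ^{d₂} with operator norms at most 1: |tr[ρ(A⊗B)]| ≤ (1/2)·‖T‖₁·(1 + tr[σ_T (B⊗B)]) and |tr[ρ(A⊗B)]| ≤ (1/2)·‖S‖₁·(1 + tr[σ_S (A⊗A)]). -/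
open Matrix
open scoped Kronecker ComplexOrder

namespace BellPaper

variable {α β γ : Type*} [Fintype α] [Fintype β] [Fintype γ]

/-- Partial trace over the first factor of a threefold tensor product. -/
noncomputable def ptr1 (T : Matrix ((α × β) × γ) ((α × β) × γ) ℂ) :
    Matrix (β × γ) (β × γ) ℂ :=
  fun p q => ∑ i : α, T ((i, p.1), p.2) ((i, q.1), q.2)

/-- Partial trace over the second factor of a threefold tensor product. -/
noncomputable def ptr2 (T : Matrix ((α × β) × γ) ((α × β) × γ) ℂ) :
    Matrix (α × γ) (α × γ) ℂ :=
  fun p q => ∑ j : β, T ((p.1, j), p.2) ((q.1, j), q.2)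

/-- Partial trace over the third factor of a threefold tensor product. -/
noncomputable def ptr3 (T : Matrix ((α × β) × γ) ((α × β) × γ) ℂ) :
    Matrix (α × β) (α × β) ℂ :=
  fun p q => ∑ k : γ, T (p, k) (q, k)

/-- Partial trace over the second factor of a twofold tensor product. -/
noncomputable def ptrB (M : Matrix (α × β) (α × β) ℂ) : Matrix α α ℂ :=
  fun i i' => ∑ j : β, M (i, j) (i', j)

/-- A density matrix: positive semidefinite with unit trace. -/
def IsDensityMatrix {n : Type*} [Fintype n] (ρ : Matrix n n ℂ) : Prop :=
  ρ.PosSemidef ∧ ρ.trace = 1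

/-- Source-operator of type `T₁₂₂` for a state on ℂ^{d₁}⊗ℂ^{d₂}. -/
def IsSource122 {d₁ d₂ : ℕ} (ρ : Matrix (Fin d₁ × Fin d₂) (Fin d₁ × Fin d₂) ℂ)
    (T : Matrix ((Fin d₁ × Fin d₂) × Fin d₂) ((Fin d₁ × Fin d₂) × Fin d₂) ℂ) : Prop :=
  T.IsHermitian ∧ ptr2 T = ρ ∧ ptr3 T = ρ

/-- Source-operator of type `T₁₁₂` for a state on ℂ^{d₁}⊗ℂ^{d₂}. -/
def IsSource112 {d₁ d₂ : ℕ} (ρ : Matrix (Fin d₁ × Fin d₂) (Fin d₁ × Fin d₂) ℂ)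
    (S : Matrix ((Fin d₁ × Fin d₁) × Fin d₂) ((Fin d₁ × Fin d₁) × Fin d₂) ℂ) : Prop :=
  S.IsHermitian ∧ ptr1 S = ρ ∧ ptr2 S = ρ

/-- A DSO state: a density matrix admitting a positive semidefinite source-operator. -/
def IsDSO {d₁ d₂ : ℕ} (ρ : Matrix (Fin d₁ × Fin d₂) (Fin d₁ × Fin d₂) ℂ) : Prop :=
  IsDensityMatrix ρ ∧
    ((∃ T, T.PosSemidef ∧ IsSource122 ρ T) ∨ (∃ S, S.PosSemidef ∧ IsSource112 ρ S))

/-- A Bell class state: a density matrix admitting a density source-operator with the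
special dilation property (all three partial traces equal the state). -/
def IsBellClass {d : ℕ} (ρ : Matrix (Fin d × Fin d) (Fin d × Fin d) ℂ) : Prop :=
  IsDensityMatrix ρ ∧
    ∃ T : Matrix ((Fin d × Fin d) × Fin d) ((Fin d × Fin d) × Fin d) ℂ,
      T.PosSemidef ∧ ptr1 T = ρ ∧ ptr2 T = ρ ∧ ptr3 T = ρ

/-- The operator (spectral) norm of a matrix acting on a Euclidean space. -/
noncomputable def opNorm {n : Type*} [Fintype n] [DecidableEq n] (W : Matrix n n ℂ) : ℝ :=
  ‖Matrix.toEuclideanCLM (𝕜 := ℂ) W‖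

/-- The swap (permutation) operator `V_d` on ℂ^d ⊗ ℂ^d. -/
noncomputable def swapMat (d : ℕ) : Matrix (Fin d × Fin d) (Fin d × Fin d) ℂ :=
  fun p q => if p.1 = q.2 ∧ p.2 = q.1 then 1 else 0

/-- The Werner state on ℂ^d ⊗ ℂ^d. -/
noncomputable def werner (d : ℕ) : Matrix (Fin d × Fin d) (Fin d × Fin d) ℂ :=
  (((d : ℂ) + 1) / (d : ℂ) ^ 3) • (1 : Matrix (Fin d × Fin d) (Fin d × Fin d) ℂ)
    - ((d : ℂ) ^ 2)⁻¹ • swapMat d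

/-- The triple of indices of a point of the threefold product. -/
def triple {d : ℕ} (p : (Fin d × Fin d) × Fin d) : Fin 3 → Fin d := ![p.1.1, p.1.2, p.2]

/-- The unitary permuting the three tensor factors of ℂ^d ⊗ ℂ^d ⊗ ℂ^d according to π. -/
noncomputable def permMat (d : ℕ) (π : Equiv.Perm (Fin 3)) :
    Matrix ((Fin d × Fin d) × Fin d) ((Fin d × Fin d) × Fin d) ℂ :=
  fun p q => if ∀ i, triple p (π i) = triple q i then 1 else 0

/-- The antisymmetrization projection `Q_d^{(-)}` on ℂ^d ⊗ ℂ^d ⊗ ℂ^d. -/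
noncomputable def antisym (d : ℕ) :
    Matrix ((Fin d × Fin d) × Fin d) ((Fin d × Fin d) × Fin d) ℂ :=
  (6 : ℂ)⁻¹ • ∑ π : Equiv.Perm (Fin 3), (((Equiv.Perm.sign π : ℤ) : ℂ)) • permMat d π

/-- Tensor product of two vectors. -/
def tens {m n : Type*} (u : m → ℂ) (v : n → ℂ) : m × n → ℂ := fun p => u p.1 * v p.2

/-- The rank-one operator |v⟩⟨v|. -/
noncomputable def outer {n : Type*} (v : n → ℂ) : Matrix n n ℂ :=
  Matrix.vecMulVec v (star v)



section AuxLemmas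

variable {n : Type*} [Fintype n]

private lemma exists_eq_ct_mul_self [DecidableEq n] {P : Matrix n n ℂ} (hP : P.PosSemidef) :
    ∃ C : Matrix n n ℂ, P = Cᴴ * C := by
  open scoped MatrixOrder Matrix.Norms.L2Operator in
  obtain ⟨C, hC⟩ := CStarAlgebra.nonneg_iff_eq_star_mul_self.mp hP.nonneg
  exact ⟨C, hC⟩

private lemma star_trace_mul_herm {T M : Matrix n n ℂ} (hT : T.IsHermitian) (hM : M.IsHermitian) :
    star ((T * M).trace) = (T * M).trace := by
  calc star ((T * M).trace) = ((T * M)ᴴ).trace := by rw [Matrix.trace_conjTranspose]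
  _ = (Mᴴ * Tᴴ).trace := by rw [conjTranspose_mul]
  _ = (M * T).trace := by rw [hT.eq, hM.eq]
  _ = (T * M).trace := trace_mul_comm M T

private lemma psd_trace_nonneg {P : Matrix n n ℂ} (hP : P.PosSemidef) : 0 ≤ P.trace := by
  classical
  have h : ∀ i, 0 ≤ P i i := fun i => by
    simpa [mulVec_single, dotProduct, Pi.single_apply] using hP.dotProduct_mulVec_nonneg (Pi.single i 1)
  exact Finset.sum_nonneg fun i _ => h i

private lemma trace_mul_psd_nonneg [DecidableEq n] {P Q : Matrix n n ℂ}
    (hP : P.PosSemidef) (hQ : Q.PosSemidef) : 0 ≤ (P * Q).trace := by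
  obtain ⟨C, rfl⟩ := exists_eq_ct_mul_self hQ
  rw [← Matrix.mul_assoc, trace_mul_cycle]
  exact psd_trace_nonneg (hP.mul_mul_conjTranspose_same C)

private lemma psd_eq_zero_of_trace_eq_zero [DecidableEq n] {P : Matrix n n ℂ}
    (hP : P.PosSemidef) (h : P.trace = 0) : P = 0 := by
  obtain ⟨C, rfl⟩ := exists_eq_ct_mul_self hP
  have hC : C = 0 := by
    have h2 : ∑ i : n, ∑ k : n, star (C k i) * C k i = 0 := by
      simpa [Matrix.trace, Matrix.mul_apply, Matrix.diag, conjTranspose_apply] using h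
    have h3 : ∀ i ∈ Finset.univ, (0:ℂ) ≤ ∑ k : n, star (C k i) * C k i :=
      fun i _ => Finset.sum_nonneg fun k _ => star_mul_self_nonneg _
    ext k i
    have h4 := (Finset.sum_eq_zero_iff_of_nonneg h3).mp h2 i (Finset.mem_univ i)
    have h5 : ∀ k ∈ Finset.univ, (0:ℂ) ≤ star (C k i) * C k i :=
      fun k _ => star_mul_self_nonneg _
    have h6 := (Finset.sum_eq_zero_iff_of_nonneg h5).mp h4 k (Finset.mem_univ k)
    have h7 : (Complex.normSq (C k i) : ℂ) = 0 := by
      rw [Complex.normSq_eq_conj_mul_self]; exact h6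
    have h8 : Complex.normSq (C k i) = 0 := by exact_mod_cast h7
    simpa using Complex.normSq_eq_zero.mp h8
  simp [hC]

private lemma herm_dotProduct_real {A : Matrix n n ℂ} (hA : A.IsHermitian) (x : n → ℂ) :
    star (star x ⬝ᵥ A *ᵥ x) = star x ⬝ᵥ A *ᵥ x := by
  rw [← star_dotProduct, star_mulVec, ← dotProduct_mulVec, hA.eq]

private lemma one_pm_psd [DecidableEq n] {A : Matrix n n ℂ} (hA : A.IsHermitian)
    (h : opNorm A ≤ 1) : (1 + A).PosSemidef ∧ (1 - A).PosSemidef := by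
  have key : ∀ x : n → ℂ, ‖star x ⬝ᵥ A *ᵥ x‖ ≤ (star x ⬝ᵥ x).re := by
    intro x
    set y : EuclideanSpace ℂ n := (WithLp.equiv 2 (n → ℂ)).symm x with hy
    have h1 : star x ⬝ᵥ A *ᵥ x = inner ℂ y (Matrix.toEuclideanCLM (𝕜 := ℂ) A y) := by
      rw [dotProduct_comm]; rfl
    have h2 : star x ⬝ᵥ x = inner ℂ y y := by
      rw [dotProduct_comm]; rfl
    rw [h1, h2]
    have h3 : ‖inner ℂ y (Matrix.toEuclideanCLM (𝕜 := ℂ) A y)‖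
        ≤ ‖y‖ * ‖(Matrix.toEuclideanCLM (𝕜 := ℂ) A) y‖ := norm_inner_le_norm _ _
    have h4 : ‖(Matrix.toEuclideanCLM (𝕜 := ℂ) A) y‖ ≤ 1 * ‖y‖ :=
      le_trans ((Matrix.toEuclideanCLM (𝕜 := ℂ) A).le_opNorm y)
        (by exact mul_le_mul_of_nonneg_right h (norm_nonneg _))
    have h5 : (inner ℂ y y).re = ‖y‖ ^ 2 := by
      rw [inner_self_eq_norm_sq_to_K]; simp [← Complex.ofReal_pow]
    calc ‖inner ℂ y (Matrix.toEuclideanCLM (𝕜 := ℂ) A y)‖ ≤ ‖y‖ * (1 * ‖y‖) :=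
          le_trans h3 (mul_le_mul_of_nonneg_left h4 (norm_nonneg _))
      _ = (inner ℂ y y).re := by rw [h5]; ring
  constructor
  · refine Matrix.PosSemidef.of_dotProduct_mulVec_nonneg (Matrix.isHermitian_one.add hA) fun x => ?_
    have hre := herm_dotProduct_real hA x
    have him : (star x ⬝ᵥ A *ᵥ x).im = 0 := by
      have := congrArg Complex.im hre; simp at this; linarith
    have habs := key x
    rw [Complex.le_def]
    constructor
    · have : -(star x ⬝ᵥ A *ᵥ x).re ≤ ‖star x ⬝ᵥ A *ᵥ x‖ :=
        le_trans (neg_le_abs _) (Complex.abs_re_le_norm _)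
      simp only [add_mulVec, one_mulVec, dotProduct_add, Complex.add_re, Complex.zero_re]
      linarith
    · have h2 : (star x ⬝ᵥ x).im = 0 := by
        have := congrArg Complex.im (herm_dotProduct_real Matrix.isHermitian_one x)
        simp at this; linarith
      simp [add_mulVec, one_mulVec, dotProduct_add, him, h2]
  · refine Matrix.PosSemidef.of_dotProduct_mulVec_nonneg (Matrix.isHermitian_one.sub hA) fun x => ?_
    have hre := herm_dotProduct_real hA x
    have him : (star x ⬝ᵥ A *ᵥ x).im = 0 := by
      have := congrArg Complex.im hre; simp at this; linarith
    have habs := key x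
    rw [Complex.le_def]
    constructor
    · have : (star x ⬝ᵥ A *ᵥ x).re ≤ ‖star x ⬝ᵥ A *ᵥ x‖ := Complex.re_le_norm _
      simp only [sub_mulVec, one_mulVec, dotProduct_sub, Complex.sub_re, Complex.zero_re]
      linarith
    · have h2 : (star x ⬝ᵥ x).im = 0 := by
        have := congrArg Complex.im (herm_dotProduct_real Matrix.isHermitian_one x)
        simp at this; linarith
      simp [sub_mulVec, one_mulVec, dotProduct_sub, him, h2]

private lemma abs_pm_psd [DecidableEq n] {T Tabs : Matrix n n ℂ} (hT : T.IsHermitian)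
    (h1 : Tabs.PosSemidef) (h2 : Tabs * Tabs = T * T) :
    (Tabs + T).PosSemidef ∧ (Tabs - T).PosSemidef := by
  set V : Matrix n n ℂ := (hT.eigenvectorUnitary : Matrix n n ℂ) with hV
  set D : n → ℝ := hT.eigenvalues with hD
  have hVV' : Vᴴ * V = 1 := by
    rw [← Matrix.star_eq_conjTranspose]
    exact (Matrix.mem_unitaryGroup_iff').mp (hT.eigenvectorUnitary).2
  have hspec : T = V * diagonal (fun i => (D i : ℂ)) * Vᴴ := by
    rw [← Matrix.star_eq_conjTranspose]
    exact hT.spectral_theorem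
  set P : Matrix n n ℂ := V * diagonal (fun i => ((|D i| : ℝ) : ℂ)) * Vᴴ with hP
  have sandwich_mul : ∀ f g : n → ℂ,
      (V * diagonal f * Vᴴ) * (V * diagonal g * Vᴴ)
        = V * diagonal (fun i => f i * g i) * Vᴴ := by
    intro f g
    have e : V * diagonal f * Vᴴ * (V * diagonal g * Vᴴ)
        = V * (diagonal f * (Vᴴ * V) * diagonal g) * Vᴴ := by noncomm_ring
    rw [e, hVV', Matrix.mul_one, diagonal_mul_diagonal]
  have hPsq : P * P = T * T := by
    rw [hP, hspec, sandwich_mul, sandwich_mul]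
    have e : (fun i => ((|D i| : ℝ) : ℂ) * ((|D i| : ℝ) : ℂ))
        = (fun i => ((D i : ℂ)) * (D i : ℂ)) := by
      funext i
      rw [← Complex.ofReal_mul, ← Complex.ofReal_mul, abs_mul_abs_self]
    rw [e]
  have psd_of_diag : ∀ f : n → ℝ, (0 ≤ f) →
      (V * diagonal (fun i => ((f i : ℝ) : ℂ)) * Vᴴ).PosSemidef := by
    intro f hf
    have hd : (0 : n → ℂ) ≤ (fun i => ((f i : ℝ) : ℂ)) := by
      intro i
      simp only [Pi.zero_apply]
      exact_mod_cast Complex.zero_le_real.mpr (hf i)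
    simpa using (Matrix.PosSemidef.diagonal hd).mul_mul_conjTranspose_same V
  have hPpsd : P.PosSemidef := psd_of_diag (fun i => |D i|) (fun i => abs_nonneg _)
  have hTabs : Tabs = P := open scoped MatrixOrder in
    (CFC.sq_eq_sq_iff Tabs P h1.nonneg hPpsd.nonneg).mp (by rw [pow_two, pow_two, h2, hPsq])
  have sandwich_add : ∀ f g : n → ℂ,
      (V * diagonal f * Vᴴ) + (V * diagonal g * Vᴴ)
        = V * diagonal (fun i => f i + g i) * Vᴴ := by
    intro f g
    rw [← Matrix.add_mul, ← Matrix.mul_add, diagonal_add]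
  have sandwich_sub : ∀ f g : n → ℂ,
      (V * diagonal f * Vᴴ) - (V * diagonal g * Vᴴ)
        = V * diagonal (fun i => f i - g i) * Vᴴ := by
    intro f g
    rw [← Matrix.sub_mul, ← Matrix.mul_sub, diagonal_sub]
  constructor
  · rw [hTabs, hP, hspec, sandwich_add]
    have := psd_of_diag (fun i => |D i| + D i) (fun i => by
      simp only [Pi.zero_apply]; linarith [neg_abs_le (D i)])
    simpa [Complex.ofReal_add] using this
  · rw [hTabs, hP, hspec, sandwich_sub]
    have := psd_of_diag (fun i => |D i| - D i) (fun i => by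
      simp only [Pi.zero_apply]; linarith [le_abs_self (D i)])
    simpa [Complex.ofReal_sub] using this

private lemma half_psd {X G1 G2 : Matrix n n ℂ} (hX : X.IsHermitian)
    (h : X + X = G1 + G2) (h1 : G1.PosSemidef) (h2 : G2.PosSemidef) : X.PosSemidef := by
  refine Matrix.PosSemidef.of_dotProduct_mulVec_nonneg hX fun x => ?_
  have e : star x ⬝ᵥ (X + X) *ᵥ x = star x ⬝ᵥ G1 *ᵥ x + star x ⬝ᵥ G2 *ᵥ x := by
    rw [h, add_mulVec, dotProduct_add]
  rw [add_mulVec, dotProduct_add] at e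
  have q1 := h1.dotProduct_mulVec_nonneg x
  have q2 := h2.dotProduct_mulVec_nonneg x
  rw [Complex.le_def] at q1 q2 ⊢
  have e1 := congrArg Complex.re e
  have e2 := congrArg Complex.im e
  simp only [Complex.add_re, Complex.add_im, Complex.zero_re, Complex.zero_im] at *
  constructor
  · linarith [q1.1, q2.1]
  · linarith [q1.2, q2.2]

private lemma key_bound [DecidableEq n] {T Tabs M N : Matrix n n ℂ}
    (hp : (Tabs + T).PosSemidef) (hm : (Tabs - T).PosSemidef)
    (hNp : (N + M).PosSemidef) (hNm : (N - M).PosSemidef) :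
    ‖(T * M).trace‖ ≤ ((Tabs * N).trace).re := by
  have e1 := trace_mul_psd_nonneg hp hNp
  have e2 := trace_mul_psd_nonneg hm hNm
  have e3 := trace_mul_psd_nonneg hp hNm
  have e4 := trace_mul_psd_nonneg hm hNp
  simp only [add_mul, mul_add, sub_mul, mul_sub, Matrix.trace_add, Matrix.trace_sub]
    at e1 e2 e3 e4
  set a := (Tabs * N).trace
  set b := (Tabs * M).trace
  set c := (T * N).trace
  set d := (T * M).trace
  rw [Complex.le_def] at e1 e2 e3 e4
  simp only [Complex.add_re, Complex.sub_re, Complex.add_im, Complex.sub_im,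
    Complex.zero_re, Complex.zero_im] at e1 e2 e3 e4
  have him : d.im = 0 := by linarith [e1.2, e2.2, e3.2, e4.2]
  have h1 : d.re ≤ a.re := by linarith [e3.1, e4.1]
  have h2 : -a.re ≤ d.re := by linarith [e1.1, e2.1]
  have hd : d = (d.re : ℂ) := Complex.ext rfl (by simp [him])
  rw [hd, Complex.norm_real, Real.norm_eq_abs]
  exact abs_le.mpr ⟨h2, h1⟩

private lemma kron_conjTranspose {l m p q : Type*} (A : Matrix l m ℂ) (B : Matrix p q ℂ) :
    (A ⊗ₖ B)ᴴ = Aᴴ ⊗ₖ Bᴴ := by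
  ext ⟨i, j⟩ ⟨k, l⟩
  simp [conjTranspose_apply, star_mul']

private lemma kron_isHermitian {l p : Type*} {A : Matrix l l ℂ} {B : Matrix p p ℂ}
    (hA : A.IsHermitian) (hB : B.IsHermitian) : (A ⊗ₖ B).IsHermitian := by
  rw [Matrix.IsHermitian, kron_conjTranspose, hA.eq, hB.eq]

private lemma kron_psd {m p : Type*} [Fintype m] [Fintype p] [DecidableEq m] [DecidableEq p]
    {P : Matrix m m ℂ} {Q : Matrix p p ℂ} (hP : P.PosSemidef) (hQ : Q.PosSemidef) :
    (P ⊗ₖ Q).PosSemidef := by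
  obtain ⟨B, rfl⟩ := exists_eq_ct_mul_self hP
  obtain ⟨C, rfl⟩ := exists_eq_ct_mul_self hQ
  rw [Matrix.mul_kronecker_mul, ← kron_conjTranspose]
  exact posSemidef_conjTranspose_mul_self _

private lemma sub_kron {l m p q : Type*} (A₁ A₂ : Matrix l m ℂ) (B : Matrix p q ℂ) :
    (A₁ - A₂) ⊗ₖ B = A₁ ⊗ₖ B - A₂ ⊗ₖ B := by
  ext ⟨i, j⟩ ⟨k, l⟩
  simp [kroneckerMap_apply, sub_mul]

private lemma kron_sub {l m p q : Type*} (A : Matrix l m ℂ) (B₁ B₂ : Matrix p q ℂ) :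
    A ⊗ₖ (B₁ - B₂) = A ⊗ₖ B₁ - A ⊗ₖ B₂ := by
  ext ⟨i, j⟩ ⟨k, l⟩
  simp [kroneckerMap_apply, mul_sub]

private lemma trace_mul_kron3 [DecidableEq γ] (X : Matrix ((α × β) × γ) ((α × β) × γ) ℂ)
    (W : Matrix (α × β) (α × β) ℂ) :
    (X * (W ⊗ₖ (1 : Matrix γ γ ℂ))).trace = (ptr3 X * W).trace := by
  simp only [Matrix.trace, Matrix.diag, Matrix.mul_apply, kroneckerMap_apply,
    Matrix.one_apply, mul_ite, mul_one, mul_zero, ite_mul, zero_mul, one_mul,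
    Fintype.sum_prod_type, ptr3, Finset.sum_ite_irrel, Finset.sum_const_zero,
    Finset.sum_ite_eq', Finset.mem_univ, if_true, Finset.sum_mul]
  refine Finset.sum_congr rfl fun x _ => Finset.sum_congr rfl fun y _ => ?_
  rw [Finset.sum_comm]
  refine Finset.sum_congr rfl fun a _ => ?_
  rw [Finset.sum_comm]

private lemma trace_mul_kron2 [DecidableEq β] (X : Matrix ((α × β) × γ) ((α × β) × γ) ℂ)
    (A : Matrix α α ℂ) (B : Matrix γ γ ℂ) :
    (X * ((A ⊗ₖ (1 : Matrix β β ℂ)) ⊗ₖ B)).trace = (ptr2 X * (A ⊗ₖ B)).trace := by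
  simp only [Matrix.trace, Matrix.diag, Matrix.mul_apply, kroneckerMap_apply,
    Matrix.one_apply, mul_ite, mul_one, mul_zero, ite_mul, zero_mul, one_mul,
    Fintype.sum_prod_type, ptr2, Finset.sum_ite_irrel, Finset.sum_const_zero,
    Finset.sum_ite_eq', Finset.mem_univ, if_true, Finset.sum_mul]
  refine Finset.sum_congr rfl fun x _ => ?_
  rw [Finset.sum_comm]
  refine Finset.sum_congr rfl fun a _ => ?_
  rw [Finset.sum_comm]
  refine Finset.sum_congr rfl fun b _ => ?_
  rw [Finset.sum_comm]

private lemma trace_mul_kron1 [DecidableEq α] (X : Matrix ((α × β) × γ) ((α × β) × γ) ℂ)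
    (A : Matrix β β ℂ) (B : Matrix γ γ ℂ) :
    (X * (((1 : Matrix α α ℂ) ⊗ₖ A) ⊗ₖ B)).trace = (ptr1 X * (A ⊗ₖ B)).trace := by
  simp only [Matrix.trace, Matrix.diag, Matrix.mul_apply, kroneckerMap_apply,
    Matrix.one_apply, mul_ite, mul_one, mul_zero, ite_mul, zero_mul, one_mul,
    Fintype.sum_prod_type, ptr1, Finset.sum_ite_irrel, Finset.sum_const_zero,
    Finset.sum_ite_eq', Finset.mem_univ, if_true, Finset.sum_mul]
  rw [Finset.sum_comm]
  refine Finset.sum_congr rfl fun a _ => ?_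
  rw [Finset.sum_comm]
  refine Finset.sum_congr rfl fun b _ => ?_
  rw [Finset.sum_comm]
  refine Finset.sum_congr rfl fun c _ => ?_
  rw [Finset.sum_comm]

private lemma trace_ptr3 (X : Matrix ((α × β) × γ) ((α × β) × γ) ℂ) :
    (ptr3 X).trace = X.trace := by
  simp only [Matrix.trace, Matrix.diag, ptr3, Fintype.sum_prod_type]

private lemma assemble {z : ℂ} {tr xr : ℝ} (h : 2 * ‖z‖ ≤ tr + xr) (ht : 0 < tr) :
    ‖z‖ ≤ (1 / 2) * tr * (1 + tr⁻¹ * xr) := by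
  have e : (1 / 2 : ℝ) * tr * (1 + tr⁻¹ * xr) = (tr + xr) / 2 := by
    field_simp
  rw [e]
  linarith

end AuxLemmas

/-- the upper bounds (33) for a single product average, in terms of
source-operators of both types. -/
theorem single_product_bounds {d₁ d₂ : ℕ}
    (ρ : Matrix (Fin d₁ × Fin d₂) (Fin d₁ × Fin d₂) ℂ) (hρ : IsDensityMatrix ρ)
    (T Tabs : Matrix ((Fin d₁ × Fin d₂) × Fin d₂) ((Fin d₁ × Fin d₂) × Fin d₂) ℂ)
    (hT : IsSource122 ρ T) (hT0 : T ≠ 0)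
    (hTabs : Tabs.PosSemidef ∧ Tabs * Tabs = T * T)
    (S Sabs : Matrix ((Fin d₁ × Fin d₁) × Fin d₂) ((Fin d₁ × Fin d₁) × Fin d₂) ℂ)
    (hS : IsSource112 ρ S) (hS0 : S ≠ 0)
    (hSabs : Sabs.PosSemidef ∧ Sabs * Sabs = S * S)
    (A : Matrix (Fin d₁) (Fin d₁) ℂ) (B : Matrix (Fin d₂) (Fin d₂) ℂ)
    (hA : A.IsHermitian) (hB : B.IsHermitian)
    (hnA : opNorm A ≤ 1) (hnB : opNorm B ≤ 1) :
    ‖(ρ * (A ⊗ₖ B)).trace‖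
      ≤ (1 / 2) * Tabs.trace.re *
        (1 + (((Tabs.trace)⁻¹ • ptr1 Tabs * (B ⊗ₖ B)).trace).re)
    ∧ ‖(ρ * (A ⊗ₖ B)).trace‖
      ≤ (1 / 2) * Sabs.trace.re *
        (1 + (((Sabs.trace)⁻¹ • ptr3 Sabs * (A ⊗ₖ A)).trace).re) := by
  obtain ⟨hTH, hTp2, hTp3⟩ := hT
  obtain ⟨hTabsPSD, hTabsSq⟩ := hTabs
  obtain ⟨hSH, hSp1, hSp2⟩ := hS
  obtain ⟨hSabsPSD, hSabsSq⟩ := hSabs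
  obtain ⟨h1pA, h1mA⟩ := one_pm_psd hA hnA
  obtain ⟨h1pB, h1mB⟩ := one_pm_psd hB hnB
  constructor
  · -- the T (type 122) bound
    set M : Matrix ((Fin d₁ × Fin d₂) × Fin d₂) ((Fin d₁ × Fin d₂) × Fin d₂) ℂ :=
      (A ⊗ₖ B) ⊗ₖ (1 : Matrix (Fin d₂) (Fin d₂) ℂ)
        + (A ⊗ₖ (1 : Matrix (Fin d₂) (Fin d₂) ℂ)) ⊗ₖ B with hMdef
    set N : Matrix ((Fin d₁ × Fin d₂) × Fin d₂) ((Fin d₁ × Fin d₂) × Fin d₂) ℂ :=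
      ((1 : Matrix (Fin d₁) (Fin d₁) ℂ) ⊗ₖ (1 : Matrix (Fin d₂) (Fin d₂) ℂ))
          ⊗ₖ (1 : Matrix (Fin d₂) (Fin d₂) ℂ)
        + ((1 : Matrix (Fin d₁) (Fin d₁) ℂ) ⊗ₖ B) ⊗ₖ B with hNdef
    have hMh : M.IsHermitian :=
      (kron_isHermitian (kron_isHermitian hA hB) isHermitian_one).add
        (kron_isHermitian (kron_isHermitian hA isHermitian_one) hB)
    have hNh : N.IsHermitian :=
      (kron_isHermitian (kron_isHermitian isHermitian_one isHermitian_one)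
        isHermitian_one).add (kron_isHermitian (kron_isHermitian isHermitian_one hB) hB)
    have hNMp : (N + M).PosSemidef := by
      refine half_psd (hNh.add hMh) (G1 := ((1 + A) ⊗ₖ (1 + B)) ⊗ₖ (1 + B))
        (G2 := ((1 - A) ⊗ₖ (1 - B)) ⊗ₖ (1 - B)) ?_
        (kron_psd (kron_psd h1pA h1pB) h1pB) (kron_psd (kron_psd h1mA h1mB) h1mB)
      rw [hMdef, hNdef]
      simp only [add_kronecker, kronecker_add, sub_kron, kron_sub]
      abel
    have hNMm : (N - M).PosSemidef := by
      refine half_psd (hNh.sub hMh) (G1 := ((1 + A) ⊗ₖ (1 - B)) ⊗ₖ (1 - B))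
        (G2 := ((1 - A) ⊗ₖ (1 + B)) ⊗ₖ (1 + B)) ?_
        (kron_psd (kron_psd h1pA h1mB) h1mB) (kron_psd (kron_psd h1mA h1pB) h1pB)
      rw [hMdef, hNdef]
      simp only [add_kronecker, kronecker_add, sub_kron, kron_sub]
      abel
    obtain ⟨hTabsp, hTabsm⟩ := abs_pm_psd hTH hTabsPSD hTabsSq
    have key := key_bound hTabsp hTabsm hNMp hNMm
    have htm : (T * M).trace = 2 * (ρ * (A ⊗ₖ B)).trace := by
      rw [hMdef, mul_add, Matrix.trace_add, trace_mul_kron3, trace_mul_kron2, hTp3, hTp2]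
      ring
    have htabs : (Tabs * N).trace = Tabs.trace + (ptr1 Tabs * (B ⊗ₖ B)).trace := by
      rw [hNdef, mul_add, Matrix.trace_add, trace_mul_kron3, trace_mul_kron1,
        one_kronecker_one, Matrix.mul_one, trace_ptr3]
    -- trace of Tabs is a positive real
    have htr0 : 0 ≤ Tabs.trace := psd_trace_nonneg hTabsPSD
    have htrne : Tabs.trace ≠ 0 := by
      intro h0
      have hz : Tabs = 0 := psd_eq_zero_of_trace_eq_zero hTabsPSD h0
      have : T = 0 := by
        have : Tᴴ * T = 0 := by rw [hTH.eq, ← hTabsSq, hz, Matrix.mul_zero]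
        exact Matrix.conjTranspose_mul_self_eq_zero.mp this
      exact hT0 this
    rw [Complex.le_def] at htr0
    simp only [Complex.zero_re, Complex.zero_im] at htr0
    have htim : Tabs.trace.im = 0 := htr0.2.symm
    have htpos : 0 < Tabs.trace.re := by
      rcases lt_or_eq_of_le htr0.1 with h | h
      · exact h
      · exact absurd (Complex.ext h.symm htim) htrne
    -- compute the right-hand side
    have hrhs : (((Tabs.trace)⁻¹ • ptr1 Tabs * (B ⊗ₖ B)).trace).re
        = (Tabs.trace.re)⁻¹ * ((ptr1 Tabs * (B ⊗ₖ B)).trace).re := by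
      rw [Matrix.smul_mul, Matrix.trace_smul, smul_eq_mul]
      have : Tabs.trace = ((Tabs.trace.re : ℝ) : ℂ) := Complex.ext rfl (by simp [htim])
      conv_lhs => rw [this, ← Complex.ofReal_inv]
      simp [Complex.mul_re]
    have hlhs : 2 * ‖(ρ * (A ⊗ₖ B)).trace‖
        ≤ Tabs.trace.re + ((ptr1 Tabs * (B ⊗ₖ B)).trace).re := by
      have e1 : ‖(T * M).trace‖ = 2 * ‖(ρ * (A ⊗ₖ B)).trace‖ := by
        rw [htm, norm_mul]
        simp
      have e2 : ((Tabs * N).trace).re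
          = Tabs.trace.re + ((ptr1 Tabs * (B ⊗ₖ B)).trace).re := by
        rw [htabs, Complex.add_re]
      rw [e1, e2] at key
      exact key
    rw [hrhs]
    exact assemble hlhs htpos
  · -- the S (type 112) bound
    set M : Matrix ((Fin d₁ × Fin d₁) × Fin d₂) ((Fin d₁ × Fin d₁) × Fin d₂) ℂ :=
      (A ⊗ₖ (1 : Matrix (Fin d₁) (Fin d₁) ℂ)) ⊗ₖ B
        + ((1 : Matrix (Fin d₁) (Fin d₁) ℂ) ⊗ₖ A) ⊗ₖ B with hMdef
    set N : Matrix ((Fin d₁ × Fin d₁) × Fin d₂) ((Fin d₁ × Fin d₁) × Fin d₂) ℂ :=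
      ((1 : Matrix (Fin d₁) (Fin d₁) ℂ) ⊗ₖ (1 : Matrix (Fin d₁) (Fin d₁) ℂ))
          ⊗ₖ (1 : Matrix (Fin d₂) (Fin d₂) ℂ)
        + (A ⊗ₖ A) ⊗ₖ (1 : Matrix (Fin d₂) (Fin d₂) ℂ) with hNdef
    have hMh : M.IsHermitian :=
      (kron_isHermitian (kron_isHermitian hA isHermitian_one) hB).add
        (kron_isHermitian (kron_isHermitian isHermitian_one hA) hB)
    have hNh : N.IsHermitian :=
      (kron_isHermitian (kron_isHermitian isHermitian_one isHermitian_one)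
        isHermitian_one).add (kron_isHermitian (kron_isHermitian hA hA) isHermitian_one)
    have hNMp : (N + M).PosSemidef := by
      refine half_psd (hNh.add hMh) (G1 := ((1 + A) ⊗ₖ (1 + A)) ⊗ₖ (1 + B))
        (G2 := ((1 - A) ⊗ₖ (1 - A)) ⊗ₖ (1 - B)) ?_
        (kron_psd (kron_psd h1pA h1pA) h1pB) (kron_psd (kron_psd h1mA h1mA) h1mB)
      rw [hMdef, hNdef]
      simp only [add_kronecker, kronecker_add, sub_kron, kron_sub]
      abel
    have hNMm : (N - M).PosSemidef := by
      refine half_psd (hNh.sub hMh) (G1 := ((1 + A) ⊗ₖ (1 + A)) ⊗ₖ (1 - B))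
        (G2 := ((1 - A) ⊗ₖ (1 - A)) ⊗ₖ (1 + B)) ?_
        (kron_psd (kron_psd h1pA h1pA) h1mB) (kron_psd (kron_psd h1mA h1mA) h1pB)
      rw [hMdef, hNdef]
      simp only [add_kronecker, kronecker_add, sub_kron, kron_sub]
      abel
    obtain ⟨hSabsp, hSabsm⟩ := abs_pm_psd hSH hSabsPSD hSabsSq
    have key := key_bound hSabsp hSabsm hNMp hNMm
    have htm : (S * M).trace = 2 * (ρ * (A ⊗ₖ B)).trace := by
      rw [hMdef, mul_add, Matrix.trace_add, trace_mul_kron2, trace_mul_kron1, hSp2, hSp1]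
      ring
    have htabs : (Sabs * N).trace = Sabs.trace + (ptr3 Sabs * (A ⊗ₖ A)).trace := by
      rw [hNdef, mul_add, Matrix.trace_add, trace_mul_kron3, trace_mul_kron3,
        one_kronecker_one, Matrix.mul_one, trace_ptr3]
    have htr0 : 0 ≤ Sabs.trace := psd_trace_nonneg hSabsPSD
    have htrne : Sabs.trace ≠ 0 := by
      intro h0
      have hz : Sabs = 0 := psd_eq_zero_of_trace_eq_zero hSabsPSD h0
      have : S = 0 := by
        have : Sᴴ * S = 0 := by rw [hSH.eq, ← hSabsSq, hz, Matrix.mul_zero]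
        exact Matrix.conjTranspose_mul_self_eq_zero.mp this
      exact hS0 this
    rw [Complex.le_def] at htr0
    simp only [Complex.zero_re, Complex.zero_im] at htr0
    have htim : Sabs.trace.im = 0 := htr0.2.symm
    have htpos : 0 < Sabs.trace.re := by
      rcases lt_or_eq_of_le htr0.1 with h | h
      · exact h
      · exact absurd (Complex.ext h.symm htim) htrne
    have hrhs : (((Sabs.trace)⁻¹ • ptr3 Sabs * (A ⊗ₖ A)).trace).re
        = (Sabs.trace.re)⁻¹ * ((ptr3 Sabs * (A ⊗ₖ A)).trace).re := by
      rw [Matrix.smul_mul, Matrix.trace_smul, smul_eq_mul]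
      have : Sabs.trace = ((Sabs.trace.re : ℝ) : ℂ) := Complex.ext rfl (by simp [htim])
      conv_lhs => rw [this, ← Complex.ofReal_inv]
      simp [Complex.mul_re]
    have hlhs : 2 * ‖(ρ * (A ⊗ₖ B)).trace‖
        ≤ Sabs.trace.re + ((ptr3 Sabs * (A ⊗ₖ A)).trace).re := by
      have e1 : ‖(S * M).trace‖ = 2 * ‖(ρ * (A ⊗ₖ B)).trace‖ := by
        rw [htm, norm_mul]
        simp
      have e2 : ((Sabs * N).trace).re
          = Sabs.trace.re + ((ptr3 Sabs * (A ⊗ₖ A)).trace).re := by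
        rw [htabs, Complex.add_re]
      rw [e1, e2] at key
      exact key
    rw [hrhs]
    exact assemble hlhs htpos


end BellPaper
end

section
/- Let ρ be a symmetric DSO state on ℂ^d⊗ℂ^d, i.e. a density matrix with V ρ V = ρ (V the swap operator) that admits a positive semidefinite source-operator. Let γ_{nm} (n,m = 1,2) be real numbers with |γ_{nm}| ≤ 1 such that γ₁₁γ₁₂ = −γ₂₁γ₂₂ or γ₁₁γ₂₁ = −γ₁₂γ₂₂. Then |Σ_{n,m} γ_{nm} tr[ρ(A_n⊗B_m)]| ≤ 2 for all Hermitian matrices A₁, A₂, B₁, B₂ on ℂ^d with operator norms at most 1. -/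
open Matrix
open scoped Kronecker ComplexOrder

namespace BellPaper

variable {α β γ : Type*} [Fintype α] [Fintype β] [Fintype γ]

/-! ### Auxiliary lemmas -/

section Aux

set_option linter.unusedSectionVars false

lemma abs_add_le_one_add_mul {u v : ℝ} (hu : |u| ≤ 1) (hv : |v| ≤ 1) : |u + v| ≤ 1 + u * v := by
  rw [abs_le] at *
  constructor <;> nlinarith [hu.1, hu.2, hv.1, hv.2]

lemma mul_le_abs {c x : ℝ} (hx : |x| ≤ 1) : c * x ≤ |c| := by
  calc c * x ≤ |c * x| := le_abs_self _
  _ = |c| * |x| := abs_mul _ _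
  _ ≤ |c| * 1 := by nlinarith [abs_nonneg c]
  _ = |c| := mul_one _

lemma scalar_bound (g11 g12 g21 g22 x y : ℝ)
    (h11 : |g11| ≤ 1) (h12 : |g12| ≤ 1) (h21 : |g21| ≤ 1) (h22 : |g22| ≤ 1)
    (hx : |x| ≤ 1) (hy : |y| ≤ 1)
    (hg : g11 * g12 = -(g21 * g22) ∨ g11 * g21 = -(g12 * g22)) :
    |g11 * x + g12 * y| + |g21 * x + g22 * y| ≤ 2 := by
  have hgx : ∀ g : ℝ, |g| ≤ 1 → |g * x| ≤ 1 := fun g hgg => by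
    rw [abs_mul]; nlinarith [abs_nonneg g, abs_nonneg x]
  have hgy : ∀ g : ℝ, |g| ≤ 1 → |g * y| ≤ 1 := fun g hgg => by
    rw [abs_mul]; nlinarith [abs_nonneg g, abs_nonneg y]
  rcases hg with hg | hg
  · have h1 : |g11 * x + g12 * y| ≤ 1 + (g11 * x) * (g12 * y) :=
      abs_add_le_one_add_mul (hgx _ h11) (hgy _ h12)
    have h2 : |g21 * x + g22 * y| ≤ 1 + (g21 * x) * (g22 * y) :=
      abs_add_le_one_add_mul (hgx _ h21) (hgy _ h22)
    have hz : (g11 * x) * (g12 * y) + (g21 * x) * (g22 * y) = 0 := by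
      linear_combination x * y * hg
    linarith [h1, h2]
  · have key : ∀ ε δ : ℝ, |ε| = 1 → |δ| = 1 →
        ε * (g11 * x + g12 * y) + δ * (g21 * x + g22 * y) ≤ 2 := by
      intro ε δ hε hδ
      have e1 : ε * (g11 * x + g12 * y) + δ * (g21 * x + g22 * y)
          = (ε * g11 + δ * g21) * x + (ε * g12 + δ * g22) * y := by ring
      have b1 : (ε * g11 + δ * g21) * x ≤ |ε * g11 + δ * g21| := mul_le_abs hx
      have b2 : (ε * g12 + δ * g22) * y ≤ |ε * g12 + δ * g22| := mul_le_abs hy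
      have c1 : |ε * g11 + δ * g21| ≤ 1 + (ε * g11) * (δ * g21) := by
        apply abs_add_le_one_add_mul <;> rw [abs_mul] <;> first
          | (rw [hε]; simpa using h11) | (rw [hδ]; simpa using h21)
      have c2 : |ε * g12 + δ * g22| ≤ 1 + (ε * g12) * (δ * g22) := by
        apply abs_add_le_one_add_mul <;> rw [abs_mul] <;> first
          | (rw [hε]; simpa using h12) | (rw [hδ]; simpa using h22)
      have hz : (ε * g11) * (δ * g21) + (ε * g12) * (δ * g22) = 0 := by
        linear_combination ε * δ * hg
      linarith [b1, b2, c1, c2]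
    rcases abs_cases (g11 * x + g12 * y) with ⟨e1, _⟩ | ⟨e1, _⟩ <;>
      rcases abs_cases (g21 * x + g22 * y) with ⟨e2, _⟩ | ⟨e2, _⟩ <;>
      rw [e1, e2]
    · simpa using key 1 1 (by norm_num) (by norm_num)
    · simpa using key 1 (-1) (by norm_num) (by norm_num)
    · simpa [neg_add] using key (-1) 1 (by norm_num) (by norm_num)
    · simpa [neg_add] using key (-1) (-1) (by norm_num) (by norm_num)

variable {n : Type*} [Fintype n] [DecidableEq n]

lemma abs_dotProduct_mulVec_le (W : Matrix n n ℂ) (x : n → ℂ) :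
    ‖star x ⬝ᵥ (W *ᵥ x)‖ ≤ opNorm W * (star x ⬝ᵥ x).re := by
  set x' : EuclideanSpace ℂ n := WithLp.toLp 2 x with hx'
  have h1 : star x ⬝ᵥ (W *ᵥ x)
      = inner ℂ x' (Matrix.toEuclideanCLM (𝕜 := ℂ) W x') := by
    rw [hx', toEuclideanCLM_toLp, EuclideanSpace.inner_toLp_toLp]
    exact dotProduct_comm _ _
  have h2 : (star x ⬝ᵥ x : ℂ) = inner ℂ x' x' := by
    rw [hx', EuclideanSpace.inner_toLp_toLp]
    exact dotProduct_comm _ _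
  have h3 : ((inner ℂ x' x' : ℂ)).re = ‖x'‖ ^ 2 := by
    simpa using inner_self_eq_norm_sq (𝕜 := ℂ) x'
  rw [h1, h2, h3]
  calc ‖(inner ℂ x' (Matrix.toEuclideanCLM (𝕜 := ℂ) W x') : ℂ)‖
      ≤ ‖x'‖ * ‖Matrix.toEuclideanCLM (𝕜 := ℂ) W x'‖ := norm_inner_le_norm _ _
    _ ≤ ‖x'‖ * (‖Matrix.toEuclideanCLM (𝕜 := ℂ) W‖ * ‖x'‖) := by
        gcongr; exact (Matrix.toEuclideanCLM (𝕜 := ℂ) W).le_opNorm x'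
    _ = opNorm W * ‖x'‖ ^ 2 := by rw [opNorm]; ring

lemma eigenvalues_abs_le {B : Matrix n n ℂ} (hB : B.IsHermitian) (hn : opNorm B ≤ 1) (i : n) :
    |hB.eigenvalues i| ≤ 1 := by
  have hv : (star (⇑(hB.eigenvectorBasis i)) ⬝ᵥ (⇑(hB.eigenvectorBasis i)) : ℂ) = 1 := by
    have := hB.eigenvectorBasis.orthonormal.1 i
    have h2 : (inner ℂ (hB.eigenvectorBasis i) (hB.eigenvectorBasis i) : ℂ) = 1 := by
      rw [inner_self_eq_norm_sq_to_K, this]; norm_num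
    rw [← h2, EuclideanSpace.inner_eq_star_dotProduct]
    exact dotProduct_comm _ _
  have := abs_dotProduct_mulVec_le B (⇑(hB.eigenvectorBasis i))
  rw [hv] at this
  have heq := hB.eigenvalues_eq i
  calc |hB.eigenvalues i|
      = |(star (⇑(hB.eigenvectorBasis i)) ⬝ᵥ (B *ᵥ ⇑(hB.eigenvectorBasis i)) : ℂ).re| := by
        rw [heq]; rfl
    _ ≤ ‖star (⇑(hB.eigenvectorBasis i)) ⬝ᵥ (B *ᵥ ⇑(hB.eigenvectorBasis i))‖ :=
        Complex.abs_re_le_norm _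
    _ ≤ opNorm B * (1 : ℂ).re := this
    _ ≤ 1 := by simpa using hn

lemma trace_psd_nonneg {R : Matrix n n ℂ} (hR : R.PosSemidef) : 0 ≤ R.trace := by
  rw [Matrix.trace]
  apply Finset.sum_nonneg
  intro i _
  have := hR.dotProduct_mulVec_nonneg (Pi.single i 1)
  simpa [Matrix.diag, Matrix.mulVec_single, dotProduct, Pi.single_apply, mul_comm] using this

lemma trace_mul_psd_nonneg_s15 {R S : Matrix n n ℂ} (hR : R.PosSemidef) (hS : S.PosSemidef) :
    0 ≤ (R * S).trace := by
  open scoped MatrixOrder in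
  obtain ⟨B, rfl⟩ := CStarAlgebra.nonneg_iff_eq_star_mul_self.mp hR.nonneg
  rw [star_eq_conjTranspose, ← Matrix.trace_mul_cycle B S Bᴴ]
  exact trace_psd_nonneg (hS.mul_mul_conjTranspose_same B)

lemma herm_quad_real {A : Matrix n n ℂ} (hA : A.IsHermitian) (x : n → ℂ) :
    star (star x ⬝ᵥ (A *ᵥ x)) = star x ⬝ᵥ (A *ᵥ x) := by
  rw [← Matrix.star_dotProduct]
  rw [Matrix.star_mulVec, ← Matrix.dotProduct_mulVec, hA.eq]

lemma one_sub_psd {A : Matrix n n ℂ} (hA : A.IsHermitian) (hn : opNorm A ≤ 1) :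
    ((1 : Matrix n n ℂ) - A).PosSemidef := by
  refine Matrix.PosSemidef.of_dotProduct_mulVec_nonneg ?_ ?_
  · exact Matrix.isHermitian_one.sub hA
  · intro x
    have hs : (0 : ℂ) ≤ star x ⬝ᵥ ((1 : Matrix n n ℂ) *ᵥ x) := Matrix.PosSemidef.one.dotProduct_mulVec_nonneg x
    rw [Matrix.one_mulVec] at hs
    rw [Complex.nonneg_iff] at hs ⊢
    have habs := abs_dotProduct_mulVec_le A x
    have him : (star x ⬝ᵥ (A *ᵥ x)).im = 0 := by
      have := herm_quad_real hA x
      rw [Complex.star_def, Complex.conj_eq_iff_im] at this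
      exact this
    rw [Matrix.sub_mulVec, dotProduct_sub, Matrix.one_mulVec]
    constructor
    · have hre : (star x ⬝ᵥ (A *ᵥ x)).re ≤ (star x ⬝ᵥ x : ℂ).re := by
        calc (star x ⬝ᵥ (A *ᵥ x)).re ≤ |(star x ⬝ᵥ (A *ᵥ x)).re| := le_abs_self _
          _ ≤ ‖star x ⬝ᵥ (A *ᵥ x)‖ := Complex.abs_re_le_norm _
          _ ≤ opNorm A * (star x ⬝ᵥ x : ℂ).re := habs
          _ ≤ 1 * (star x ⬝ᵥ x : ℂ).re := by nlinarith [hs.1]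
          _ = (star x ⬝ᵥ x : ℂ).re := one_mul _
      simpa using hre
    · simp [him, ← hs.2]

lemma one_add_psd {A : Matrix n n ℂ} (hA : A.IsHermitian) (hn : opNorm A ≤ 1) :
    ((1 : Matrix n n ℂ) + A).PosSemidef := by
  refine Matrix.PosSemidef.of_dotProduct_mulVec_nonneg ?_ ?_
  · exact Matrix.isHermitian_one.add hA
  · intro x
    have hs : (0 : ℂ) ≤ star x ⬝ᵥ ((1 : Matrix n n ℂ) *ᵥ x) := Matrix.PosSemidef.one.dotProduct_mulVec_nonneg x
    rw [Matrix.one_mulVec] at hs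
    rw [Complex.nonneg_iff] at hs ⊢
    have habs := abs_dotProduct_mulVec_le A x
    have him : (star x ⬝ᵥ (A *ᵥ x)).im = 0 := by
      have := herm_quad_real hA x
      rw [Complex.star_def, Complex.conj_eq_iff_im] at this
      exact this
    rw [Matrix.add_mulVec, dotProduct_add, Matrix.one_mulVec]
    constructor
    · have hre : -(star x ⬝ᵥ (A *ᵥ x)).re ≤ (star x ⬝ᵥ x : ℂ).re := by
        calc -(star x ⬝ᵥ (A *ᵥ x)).re ≤ |(star x ⬝ᵥ (A *ᵥ x)).re| := neg_le_abs _
          _ ≤ ‖star x ⬝ᵥ (A *ᵥ x)‖ := Complex.abs_re_le_norm _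
          _ ≤ opNorm A * (star x ⬝ᵥ x : ℂ).re := habs
          _ ≤ 1 * (star x ⬝ᵥ x : ℂ).re := by nlinarith [hs.1]
          _ = (star x ⬝ᵥ x : ℂ).re := one_mul _
      simp only [Complex.add_re]; linarith [hre]
    · simp [him, ← hs.2]

lemma trace_mul_real {R A : Matrix n n ℂ} (hR : R.IsHermitian) (hA : A.IsHermitian) :
    ((R * A).trace).im = 0 := by
  have : star ((R * A).trace) = (R * A).trace := by
    rw [← Matrix.trace_conjTranspose, Matrix.conjTranspose_mul, hR.eq, hA.eq,
      Matrix.trace_mul_comm]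
  rw [Complex.star_def, Complex.conj_eq_iff_im] at this
  exact this

lemma abs_trace_mul_le {R A : Matrix n n ℂ} (hR : R.PosSemidef) (hA : A.IsHermitian)
    (hn : opNorm A ≤ 1) : ‖(R * A).trace‖ ≤ R.trace.re := by
  have h1 := trace_mul_psd_nonneg_s15 hR (one_sub_psd hA hn)
  have h2 := trace_mul_psd_nonneg_s15 hR (one_add_psd hA hn)
  rw [Matrix.mul_sub, Matrix.mul_one, Matrix.trace_sub, Complex.nonneg_iff] at h1
  rw [Matrix.mul_add, Matrix.mul_one, Matrix.trace_add, Complex.nonneg_iff] at h2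
  have him := trace_mul_real hR.1 hA
  have hz : (R * A).trace = (((R * A).trace.re : ℝ) : ℂ) :=
    Complex.ext rfl (by simp [him])
  rw [hz, Complex.norm_real, Real.norm_eq_abs, abs_le]
  constructor
  · have := h2.1; rw [Complex.add_re] at this; linarith
  · have := h1.1; rw [Complex.sub_re] at this; linarith

end Aux

/-! ### Sum manipulation lemmas -/

section Sums

lemma sum_rotate {A B C : Type*} [Fintype A] [Fintype B] [Fintype C] (f : A → B → C → ℂ) :
    ∑ a : A, ∑ b : B, ∑ c : C, f a b c = ∑ b : B, ∑ c : C, ∑ a : A, f a b c := by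
  rw [Finset.sum_comm]
  exact Finset.sum_congr rfl fun b _ => Finset.sum_comm

lemma sum_rotate4 {A B C D : Type*} [Fintype A] [Fintype B] [Fintype C] [Fintype D]
    (f : A → B → C → D → ℂ) :
    ∑ a : A, ∑ b : B, ∑ c : C, ∑ d : D, f a b c d
      = ∑ b : B, ∑ c : C, ∑ d : D, ∑ a : A, f a b c d :=
  (sum_rotate (fun a b c => ∑ d : D, f a b c d)).trans
    (Finset.sum_congr rfl fun _ _ => Finset.sum_congr rfl fun _ _ => Finset.sum_comm)

lemma sum_rotate5 {A B C D E : Type*} [Fintype A] [Fintype B] [Fintype C] [Fintype D] [Fintype E]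
    (f : A → B → C → D → E → ℂ) :
    ∑ a : A, ∑ b : B, ∑ c : C, ∑ d : D, ∑ e : E, f a b c d e
      = ∑ b : B, ∑ c : C, ∑ d : D, ∑ e : E, ∑ a : A, f a b c d e :=
  (sum_rotate (fun a b c => ∑ d : D, ∑ e : E, f a b c d e)).trans
    (Finset.sum_congr rfl fun _ _ => Finset.sum_congr rfl fun _ _ =>
      sum_rotate (fun a d e => f a _ _ d e))

end Sums

/-! ### Trace identities for threefold tensor products -/

section Slots

variable [DecidableEq α] [DecidableEq β] [DecidableEq γ]

set_option linter.unusedSectionVars false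

lemma trace_slot3 (T : Matrix ((α × β) × γ) ((α × β) × γ) ℂ)
    (M : Matrix (α × β) (α × β) ℂ) :
    (T * (M ⊗ₖ (1 : Matrix γ γ ℂ))).trace = (ptr3 T * M).trace := by
  calc (T * (M ⊗ₖ (1 : Matrix γ γ ℂ))).trace
      = ∑ r : α × β, ∑ k : γ, ∑ s : α × β, ∑ k' : γ,
          T (r, k) (s, k') * (M s r * if k' = k then 1 else 0) := by
        simp only [Matrix.trace, Matrix.diag_apply]
        rw [Fintype.sum_prod_type]
        refine Finset.sum_congr rfl fun r _ => Finset.sum_congr rfl fun k _ => ?_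
        rw [Matrix.mul_apply, Fintype.sum_prod_type]
        exact Finset.sum_congr rfl fun s _ => Finset.sum_congr rfl fun k' _ => by
          simp [Matrix.kroneckerMap_apply, Matrix.one_apply]
    _ = ∑ r : α × β, ∑ k : γ, ∑ s : α × β, T (r, k) (s, k) * M s r := by
        refine Finset.sum_congr rfl fun r _ => Finset.sum_congr rfl fun k _ =>
          Finset.sum_congr rfl fun s _ => ?_
        simp [mul_ite, Finset.sum_ite_eq', mul_comm]
    _ = ∑ r : α × β, ∑ s : α × β, ∑ k : γ, T (r, k) (s, k) * M s r :=
        Finset.sum_congr rfl fun r _ => Finset.sum_comm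
    _ = (ptr3 T * M).trace := by
        simp only [Matrix.trace, Matrix.diag_apply]
        refine Finset.sum_congr rfl fun r _ => ?_
        rw [Matrix.mul_apply]
        refine Finset.sum_congr rfl fun s _ => ?_
        simp only [ptr3, Finset.sum_mul]

lemma trace_slot2 (T : Matrix ((α × β) × γ) ((α × β) × γ) ℂ)
    (A : Matrix α α ℂ) (B : Matrix γ γ ℂ) :
    (T * ((A ⊗ₖ (1 : Matrix β β ℂ)) ⊗ₖ B)).trace = (ptr2 T * (A ⊗ₖ B)).trace := by
  calc (T * ((A ⊗ₖ (1 : Matrix β β ℂ)) ⊗ₖ B)).trace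
      = ∑ i : α, ∑ j : β, ∑ k : γ, ∑ i' : α, ∑ j' : β, ∑ k' : γ,
          T ((i, j), k) ((i', j'), k') * (A i' i * (if j' = j then 1 else 0) * B k' k) := by
        simp only [Matrix.trace, Matrix.diag_apply]
        rw [Fintype.sum_prod_type, Fintype.sum_prod_type]
        refine Finset.sum_congr rfl fun i _ => Finset.sum_congr rfl fun j _ =>
          Finset.sum_congr rfl fun k _ => ?_
        rw [Matrix.mul_apply, Fintype.sum_prod_type, Fintype.sum_prod_type]
        exact Finset.sum_congr rfl fun i' _ => Finset.sum_congr rfl fun j' _ =>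
          Finset.sum_congr rfl fun k' _ => by
            simp [Matrix.kroneckerMap_apply, Matrix.one_apply]
    _ = ∑ i : α, ∑ j : β, ∑ k : γ, ∑ i' : α, ∑ k' : γ,
          T ((i, j), k) ((i', j), k') * (A i' i * B k' k) := by
        refine Finset.sum_congr rfl fun i _ => Finset.sum_congr rfl fun j _ =>
          Finset.sum_congr rfl fun k _ => Finset.sum_congr rfl fun i' _ => ?_
        rw [Finset.sum_comm]
        refine Finset.sum_congr rfl fun k' _ => ?_
        simp [mul_ite, ite_mul, Finset.sum_ite_eq', mul_comm]
    _ = ∑ i : α, ∑ k : γ, ∑ i' : α, ∑ k' : γ, ∑ j : β,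
          T ((i, j), k) ((i', j), k') * (A i' i * B k' k) :=
        Finset.sum_congr rfl fun i _ => sum_rotate4 _
    _ = (ptr2 T * (A ⊗ₖ B)).trace := by
        simp only [Matrix.trace, Matrix.diag_apply]
        rw [Fintype.sum_prod_type]
        refine Finset.sum_congr rfl fun i _ => Finset.sum_congr rfl fun k _ => ?_
        rw [Matrix.mul_apply, Fintype.sum_prod_type]
        refine Finset.sum_congr rfl fun i' _ => Finset.sum_congr rfl fun k' _ => ?_
        simp only [ptr2, Matrix.kroneckerMap_apply, Finset.sum_mul]

lemma trace_slot1 (T : Matrix ((α × β) × γ) ((α × β) × γ) ℂ)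
    (A : Matrix β β ℂ) (B : Matrix γ γ ℂ) :
    (T * (((1 : Matrix α α ℂ) ⊗ₖ A) ⊗ₖ B)).trace = (ptr1 T * (A ⊗ₖ B)).trace := by
  calc (T * (((1 : Matrix α α ℂ) ⊗ₖ A) ⊗ₖ B)).trace
      = ∑ i : α, ∑ j : β, ∑ k : γ, ∑ i' : α, ∑ j' : β, ∑ k' : γ,
          T ((i, j), k) ((i', j'), k') * ((if i' = i then 1 else 0) * A j' j * B k' k) := by
        simp only [Matrix.trace, Matrix.diag_apply]
        rw [Fintype.sum_prod_type, Fintype.sum_prod_type]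
        refine Finset.sum_congr rfl fun i _ => Finset.sum_congr rfl fun j _ =>
          Finset.sum_congr rfl fun k _ => ?_
        rw [Matrix.mul_apply, Fintype.sum_prod_type, Fintype.sum_prod_type]
        exact Finset.sum_congr rfl fun i' _ => Finset.sum_congr rfl fun j' _ =>
          Finset.sum_congr rfl fun k' _ => by
            simp [Matrix.kroneckerMap_apply, Matrix.one_apply]
    _ = ∑ i : α, ∑ j : β, ∑ k : γ, ∑ j' : β, ∑ k' : γ,
          T ((i, j), k) ((i, j'), k') * (A j' j * B k' k) := by
        refine Finset.sum_congr rfl fun i _ => Finset.sum_congr rfl fun j _ =>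
          Finset.sum_congr rfl fun k _ => ?_
        rw [sum_rotate (fun i' j' k' => T ((i, j), k) ((i', j'), k')
          * ((if i' = i then 1 else 0) * A j' j * B k' k))]
        refine Finset.sum_congr rfl fun j' _ => Finset.sum_congr rfl fun k' _ => ?_
        simp [mul_ite, ite_mul, Finset.sum_ite_eq', mul_comm]
    _ = ∑ j : β, ∑ k : γ, ∑ j' : β, ∑ k' : γ, ∑ i : α,
          T ((i, j), k) ((i, j'), k') * (A j' j * B k' k) := sum_rotate5 _
    _ = (ptr1 T * (A ⊗ₖ B)).trace := by
        simp only [Matrix.trace, Matrix.diag_apply]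
        rw [Fintype.sum_prod_type]
        refine Finset.sum_congr rfl fun j _ => Finset.sum_congr rfl fun k _ => ?_
        rw [Matrix.mul_apply, Fintype.sum_prod_type]
        refine Finset.sum_congr rfl fun j' _ => Finset.sum_congr rfl fun k' _ => ?_
        simp only [ptr1, Matrix.kroneckerMap_apply, Finset.sum_mul]

lemma trace_block122 (T : Matrix ((α × β) × γ) ((α × β) × γ) ℂ) (A : Matrix α α ℂ)
    (v : β → ℂ) (w : γ → ℂ) :
    (T * ((A ⊗ₖ diagonal v) ⊗ₖ diagonal w)).trace
      = ∑ j : β, ∑ k : γ, v j * w k *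
        ((T.submatrix (fun i : α => ((i, j), k)) (fun i : α => ((i, j), k)) * A).trace) := by
  calc (T * ((A ⊗ₖ diagonal v) ⊗ₖ diagonal w)).trace
      = ∑ i : α, ∑ j : β, ∑ k : γ, ∑ i' : α, ∑ j' : β, ∑ k' : γ,
          T ((i, j), k) ((i', j'), k')
            * (A i' i * (if j' = j then v j' else 0) * (if k' = k then w k' else 0)) := by
        simp only [Matrix.trace, Matrix.diag_apply]
        rw [Fintype.sum_prod_type, Fintype.sum_prod_type]
        refine Finset.sum_congr rfl fun i _ => Finset.sum_congr rfl fun j _ =>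
          Finset.sum_congr rfl fun k _ => ?_
        rw [Matrix.mul_apply, Fintype.sum_prod_type, Fintype.sum_prod_type]
        exact Finset.sum_congr rfl fun i' _ => Finset.sum_congr rfl fun j' _ =>
          Finset.sum_congr rfl fun k' _ => by
            simp [Matrix.kroneckerMap_apply, Matrix.diagonal_apply]
    _ = ∑ i : α, ∑ j : β, ∑ k : γ, ∑ i' : α,
          T ((i, j), k) ((i', j), k) * (A i' i * v j * w k) := by
        refine Finset.sum_congr rfl fun i _ => Finset.sum_congr rfl fun j _ =>
          Finset.sum_congr rfl fun k _ => Finset.sum_congr rfl fun i' _ => ?_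
        rw [Finset.sum_comm]
        simp [mul_ite, ite_mul, Finset.sum_ite_eq', mul_comm, mul_assoc, mul_left_comm]
    _ = ∑ j : β, ∑ k : γ, ∑ i' : α, ∑ i : α,
          T ((i, j), k) ((i', j), k) * (A i' i * v j * w k) := sum_rotate4 _
    _ = ∑ j : β, ∑ k : γ, v j * w k *
        ((T.submatrix (fun i : α => ((i, j), k)) (fun i : α => ((i, j), k)) * A).trace) := by
        refine Finset.sum_congr rfl fun j _ => Finset.sum_congr rfl fun k _ => ?_
        rw [Finset.sum_comm]
        simp only [Matrix.trace, Matrix.diag_apply, Matrix.mul_apply, Matrix.submatrix_apply,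
          Finset.mul_sum]
        exact Finset.sum_congr rfl fun i _ => Finset.sum_congr rfl fun i' _ => by ring

lemma trace_block112 (S : Matrix ((α × β) × γ) ((α × β) × γ) ℂ) (B : Matrix γ γ ℂ)
    (v : α → ℂ) (w : β → ℂ) :
    (S * ((diagonal v ⊗ₖ diagonal w) ⊗ₖ B)).trace
      = ∑ j : α, ∑ k : β, v j * w k *
        ((S.submatrix (fun i : γ => ((j, k), i)) (fun i : γ => ((j, k), i)) * B).trace) := by
  calc (S * ((diagonal v ⊗ₖ diagonal w) ⊗ₖ B)).trace
      = ∑ i : α, ∑ j : β, ∑ k : γ, ∑ i' : α, ∑ j' : β, ∑ k' : γ,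
          S ((i, j), k) ((i', j'), k')
            * ((if i' = i then v i' else 0) * (if j' = j then w j' else 0) * B k' k) := by
        simp only [Matrix.trace, Matrix.diag_apply]
        rw [Fintype.sum_prod_type, Fintype.sum_prod_type]
        refine Finset.sum_congr rfl fun i _ => Finset.sum_congr rfl fun j _ =>
          Finset.sum_congr rfl fun k _ => ?_
        rw [Matrix.mul_apply, Fintype.sum_prod_type, Fintype.sum_prod_type]
        exact Finset.sum_congr rfl fun i' _ => Finset.sum_congr rfl fun j' _ =>
          Finset.sum_congr rfl fun k' _ => by
            simp [Matrix.kroneckerMap_apply, Matrix.diagonal_apply]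
    _ = ∑ i : α, ∑ j : β, ∑ k : γ, ∑ k' : γ,
          S ((i, j), k) ((i, j), k') * (v i * w j * B k' k) := by
        refine Finset.sum_congr rfl fun i _ => Finset.sum_congr rfl fun j _ =>
          Finset.sum_congr rfl fun k _ => ?_
        rw [sum_rotate (fun i' j' k' => S ((i, j), k) ((i', j'), k')
          * ((if i' = i then v i' else 0) * (if j' = j then w j' else 0) * B k' k))]
        rw [show (∑ j' : β, ∑ k' : γ, ∑ i' : α, S ((i, j), k) ((i', j'), k')
          * ((if i' = i then v i' else 0) * (if j' = j then w j' else 0) * B k' k))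
          = ∑ j' : β, ∑ k' : γ, S ((i, j), k) ((i, j'), k')
          * (v i * (if j' = j then w j' else 0) * B k' k) from
          Finset.sum_congr rfl fun j' _ => Finset.sum_congr rfl fun k' _ => by
            simp [mul_ite, ite_mul, Finset.sum_ite_eq']]
        rw [Finset.sum_comm]
        refine Finset.sum_congr rfl fun k' _ => ?_
        simp [mul_ite, ite_mul, Finset.sum_ite_eq']
    _ = ∑ j : α, ∑ k : β, v j * w k *
        ((S.submatrix (fun i : γ => ((j, k), i)) (fun i : γ => ((j, k), i)) * B).trace) := by
        refine Finset.sum_congr rfl fun i _ => Finset.sum_congr rfl fun j _ => ?_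
        simp only [Matrix.trace, Matrix.diag_apply, Matrix.mul_apply, Matrix.submatrix_apply,
          Finset.mul_sum]
        exact Finset.sum_congr rfl fun k _ => Finset.sum_congr rfl fun k' _ => by ring

end Slots

/-! ### Conjugation and Kronecker helpers -/

section Conj

lemma kron_conjT {m n : Type*} [Fintype m] [Fintype n] (A : Matrix m m ℂ) (B : Matrix n n ℂ) :
    (A ⊗ₖ B)ᴴ = Aᴴ ⊗ₖ Bᴴ := by
  ext ⟨i, j⟩ ⟨k, l⟩
  simp [Matrix.conjTranspose_apply, Matrix.kroneckerMap_apply, mul_comm]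

lemma trace_conj {Q : Type*} [Fintype Q] (T W X : Matrix Q Q ℂ) :
    ((Wᴴ * T * W) * X).trace = (T * (W * X * Wᴴ)).trace := by
  rw [Matrix.mul_assoc Wᴴ T W, Matrix.mul_assoc Wᴴ (T * W) X, Matrix.trace_mul_comm,
    Matrix.mul_assoc T W X, Matrix.mul_assoc T (W * X) Wᴴ]

end Conj

/-! ### The key positivity bound -/

lemma key_bound_s15 {n κ Q : Type*} [Fintype n] [Fintype κ] [Fintype Q] [DecidableEq n]
    (T2 : Matrix Q Q ℂ) (hT2 : T2.PosSemidef) (e : n × κ ≃ Q)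
    (A₁ A₂ : Matrix n n ℂ) (hA₁ : A₁.IsHermitian) (hA₂ : A₂.IsHermitian)
    (hn₁ : opNorm A₁ ≤ 1) (hn₂ : opNorm A₂ ≤ 1)
    (c d : κ → ℝ) (hcd : ∀ p, |c p| + |d p| ≤ 2) :
    ‖∑ p : κ,
        (((c p : ℝ) : ℂ) * ((T2.submatrix (fun i => e (i, p)) (fun i => e (i, p)) * A₁).trace)
        + ((d p : ℝ) : ℂ) * ((T2.submatrix (fun i => e (i, p)) (fun i => e (i, p)) * A₂).trace))‖
      ≤ 2 * T2.trace.re := by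
  set R := fun p : κ => T2.submatrix (fun i => e (i, p)) (fun i => e (i, p)) with hRdef
  have hR : ∀ p, (R p).PosSemidef := fun p => hT2.submatrix _
  have htr : ∀ p, 0 ≤ (R p).trace.re := fun p => (Complex.nonneg_iff.mp (trace_psd_nonneg (hR p))).1
  have hsum : ∑ p : κ, (R p).trace = T2.trace := by
    have h0 : T2.trace = ∑ x : n × κ, T2 (e x) (e x) :=
      (Fintype.sum_equiv e (fun x => T2 (e x) (e x)) (fun q => T2 q q) (fun x => rfl)).symm
    rw [h0, Fintype.sum_prod_type, Finset.sum_comm]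
    exact Finset.sum_congr rfl fun p _ => by
      simp [hRdef, Matrix.trace, Matrix.submatrix_apply]
  have hstep : ∀ p : κ, ‖((c p : ℝ) : ℂ) * ((R p * A₁).trace)
      + ((d p : ℝ) : ℂ) * ((R p * A₂).trace)‖ ≤ 2 * (R p).trace.re := by
    intro p
    have h1 := abs_trace_mul_le (hR p) hA₁ hn₁
    have h2 := abs_trace_mul_le (hR p) hA₂ hn₂
    calc ‖((c p : ℝ) : ℂ) * ((R p * A₁).trace)
          + ((d p : ℝ) : ℂ) * ((R p * A₂).trace)‖
        ≤ ‖((c p : ℝ) : ℂ) * ((R p * A₁).trace)‖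
          + ‖((d p : ℝ) : ℂ) * ((R p * A₂).trace)‖ := norm_add_le _ _
      _ = |c p| * ‖(R p * A₁).trace‖
          + |d p| * ‖(R p * A₂).trace‖ := by
          rw [norm_mul, norm_mul, Complex.norm_real, Complex.norm_real, Real.norm_eq_abs,
              Real.norm_eq_abs]
      _ ≤ |c p| * (R p).trace.re + |d p| * (R p).trace.re :=
          add_le_add (mul_le_mul_of_nonneg_left h1 (abs_nonneg _))
            (mul_le_mul_of_nonneg_left h2 (abs_nonneg _))
      _ = (|c p| + |d p|) * (R p).trace.re := by ring
      _ ≤ 2 * (R p).trace.re := mul_le_mul_of_nonneg_right (hcd p) (htr p)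
  calc ‖∑ p : κ, (((c p : ℝ) : ℂ) * ((R p * A₁).trace)
        + ((d p : ℝ) : ℂ) * ((R p * A₂).trace))‖
      ≤ ∑ p : κ, ‖((c p : ℝ) : ℂ) * ((R p * A₁).trace)
        + ((d p : ℝ) : ℂ) * ((R p * A₂).trace)‖ := norm_sum_le _ _
    _ ≤ ∑ p : κ, 2 * (R p).trace.re := Finset.sum_le_sum fun p _ => hstep p
    _ = 2 * (∑ p : κ, (R p).trace).re := by
        rw [Complex.re_sum, Finset.mul_sum]
    _ = 2 * T2.trace.re := by rw [hsum]

/-- a symmetric DSO state satisfies the extended CHSH inequality (40). -/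
theorem symmetric_dso_extended_chsh {d : ℕ}
    (ρ : Matrix (Fin d × Fin d) (Fin d × Fin d) ℂ) (hρ : IsDSO ρ)
    (hsym : swapMat d * ρ * swapMat d = ρ)
    (γ₁₁ γ₁₂ γ₂₁ γ₂₂ : ℝ)
    (hγ₁₁ : |γ₁₁| ≤ 1) (hγ₁₂ : |γ₁₂| ≤ 1) (hγ₂₁ : |γ₂₁| ≤ 1) (hγ₂₂ : |γ₂₂| ≤ 1)
    (hγ : γ₁₁ * γ₁₂ = -(γ₂₁ * γ₂₂) ∨ γ₁₁ * γ₂₁ = -(γ₁₂ * γ₂₂))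
    (A₁ A₂ B₁ B₂ : Matrix (Fin d) (Fin d) ℂ)
    (hA₁ : A₁.IsHermitian) (hA₂ : A₂.IsHermitian) (hB₁ : B₁.IsHermitian) (hB₂ : B₂.IsHermitian)
    (hnA₁ : opNorm A₁ ≤ 1) (hnA₂ : opNorm A₂ ≤ 1) (hnB₁ : opNorm B₁ ≤ 1) (hnB₂ : opNorm B₂ ≤ 1) :
    ‖(γ₁₁ : ℂ) * (ρ * (A₁ ⊗ₖ B₁)).trace + (γ₁₂ : ℂ) * (ρ * (A₁ ⊗ₖ B₂)).trace
        + (γ₂₁ : ℂ) * (ρ * (A₂ ⊗ₖ B₁)).trace + (γ₂₂ : ℂ) * (ρ * (A₂ ⊗ₖ B₂)).trace‖ ≤ 2 := by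
  obtain ⟨⟨hρpsd, hρtr⟩, hsrc⟩ := hρ
  rcases hsrc with ⟨T, hTpsd, hTherm, hptr2, hptr3⟩ | ⟨S, hSpsd, hSherm, hptr1, hptr2⟩
  · -- Case T₁₂₂ : diagonalize B₁ (slot 2) and B₂ (slot 3)
    set U1 : Matrix (Fin d) (Fin d) ℂ := (hB₁.eigenvectorUnitary : Matrix (Fin d) (Fin d) ℂ) with hU1def
    set U2 : Matrix (Fin d) (Fin d) ℂ := (hB₂.eigenvectorUnitary : Matrix (Fin d) (Fin d) ℂ) with hU2def
    have hU1a : U1 * U1ᴴ = 1 := by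
      have := hB₁.eigenvectorUnitary.2
      rw [Matrix.mem_unitaryGroup_iff] at this
      simpa [Matrix.star_eq_conjTranspose] using this
    have hU2a : U2 * U2ᴴ = 1 := by
      have := hB₂.eigenvectorUnitary.2
      rw [Matrix.mem_unitaryGroup_iff] at this
      simpa [Matrix.star_eq_conjTranspose] using this
    set E1 : Matrix (Fin d) (Fin d) ℂ :=
      Matrix.diagonal (fun j => ((hB₁.eigenvalues j : ℝ) : ℂ)) with hE1
    set E2 : Matrix (Fin d) (Fin d) ℂ :=
      Matrix.diagonal (fun j => ((hB₂.eigenvalues j : ℝ) : ℂ)) with hE2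
    have hspec1 : B₁ = U1 * E1 * U1ᴴ := by
      rw [hE1, hU1def]
      simpa [Matrix.star_eq_conjTranspose, Function.comp_def] using hB₁.spectral_theorem
    have hspec2 : B₂ = U2 * E2 * U2ᴴ := by
      rw [hE2, hU2def]
      simpa [Matrix.star_eq_conjTranspose, Function.comp_def] using hB₂.spectral_theorem
    set W : Matrix ((Fin d × Fin d) × Fin d) ((Fin d × Fin d) × Fin d) ℂ :=
      ((1 : Matrix (Fin d) (Fin d) ℂ) ⊗ₖ U1) ⊗ₖ U2 with hW
    have hWH : Wᴴ = ((1 : Matrix (Fin d) (Fin d) ℂ) ⊗ₖ U1ᴴ) ⊗ₖ U2ᴴ := by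
      rw [hW, kron_conjT, kron_conjT, Matrix.conjTranspose_one]
    have hWW : W * Wᴴ = 1 := by
      rw [hWH, hW, ← Matrix.mul_kronecker_mul, ← Matrix.mul_kronecker_mul, one_mul,
        hU1a, hU2a, Matrix.one_kronecker_one, Matrix.one_kronecker_one]
    have hT2psd : (Wᴴ * T * W).PosSemidef := hTpsd.conjTranspose_mul_mul_same W
    have htrT : T.trace = 1 := by
      have h := trace_slot3 T (1 : Matrix (Fin d × Fin d) (Fin d × Fin d) ℂ)
      rw [Matrix.one_kronecker_one, Matrix.mul_one, Matrix.mul_one, hptr3] at h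
      exact h.trans hρtr
    have htrT2 : (Wᴴ * T * W).trace = 1 := by
      have h := trace_conj T W 1
      rw [Matrix.mul_one, Matrix.mul_one, hWW, Matrix.mul_one] at h
      exact h.trans htrT
    have key1 : ∀ A : Matrix (Fin d) (Fin d) ℂ,
        (ρ * (A ⊗ₖ B₁)).trace = ∑ p : Fin d × Fin d, ((hB₁.eigenvalues p.1 : ℝ) : ℂ)
          * (((Wᴴ * T * W).submatrix (fun i => ((i, p.1), p.2)) (fun i => ((i, p.1), p.2))
              * A).trace) := by
      intro A
      rw [← hptr3, ← trace_slot3]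
      have hX : W * ((A ⊗ₖ E1) ⊗ₖ (1 : Matrix (Fin d) (Fin d) ℂ)) * Wᴴ
          = (A ⊗ₖ B₁) ⊗ₖ (1 : Matrix (Fin d) (Fin d) ℂ) := by
        rw [hWH, hW]
        simp only [← Matrix.mul_kronecker_mul]
        rw [one_mul, mul_one, mul_one, hU2a, ← hspec1]
      rw [← hX, ← trace_conj, hE1,
        show (1 : Matrix (Fin d) (Fin d) ℂ) = Matrix.diagonal (fun _ => (1 : ℂ)) from
          Matrix.diagonal_one.symm,
        trace_block122, Fintype.sum_prod_type]
      exact Finset.sum_congr rfl fun j _ => Finset.sum_congr rfl fun k _ => by simp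
    have key2 : ∀ A : Matrix (Fin d) (Fin d) ℂ,
        (ρ * (A ⊗ₖ B₂)).trace = ∑ p : Fin d × Fin d, ((hB₂.eigenvalues p.2 : ℝ) : ℂ)
          * (((Wᴴ * T * W).submatrix (fun i => ((i, p.1), p.2)) (fun i => ((i, p.1), p.2))
              * A).trace) := by
      intro A
      rw [← hptr2, ← trace_slot2]
      have hX : W * ((A ⊗ₖ (1 : Matrix (Fin d) (Fin d) ℂ)) ⊗ₖ E2) * Wᴴ
          = (A ⊗ₖ (1 : Matrix (Fin d) (Fin d) ℂ)) ⊗ₖ B₂ := by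
        rw [hWH, hW]
        simp only [← Matrix.mul_kronecker_mul]
        rw [one_mul, mul_one, mul_one, hU1a, ← hspec2]
      rw [← hX, ← trace_conj, hE2,
        show (1 : Matrix (Fin d) (Fin d) ℂ) = Matrix.diagonal (fun _ => (1 : ℂ)) from
          Matrix.diagonal_one.symm,
        trace_block122, Fintype.sum_prod_type]
      exact Finset.sum_congr rfl fun j _ => Finset.sum_congr rfl fun k _ => by simp
    have htotal : (γ₁₁ : ℂ) * (ρ * (A₁ ⊗ₖ B₁)).trace + (γ₁₂ : ℂ) * (ρ * (A₁ ⊗ₖ B₂)).trace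
        + (γ₂₁ : ℂ) * (ρ * (A₂ ⊗ₖ B₁)).trace + (γ₂₂ : ℂ) * (ρ * (A₂ ⊗ₖ B₂)).trace
        = ∑ p : Fin d × Fin d,
          (((γ₁₁ * hB₁.eigenvalues p.1 + γ₁₂ * hB₂.eigenvalues p.2 : ℝ) : ℂ)
            * (((Wᴴ * T * W).submatrix (fun i => ((i, p.1), p.2)) (fun i => ((i, p.1), p.2))
                * A₁).trace)
          + ((γ₂₁ * hB₁.eigenvalues p.1 + γ₂₂ * hB₂.eigenvalues p.2 : ℝ) : ℂ)
            * (((Wᴴ * T * W).submatrix (fun i => ((i, p.1), p.2)) (fun i => ((i, p.1), p.2))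
                * A₂).trace)) := by
      rw [key1 A₁, key2 A₁, key1 A₂, key2 A₂, Finset.mul_sum, Finset.mul_sum, Finset.mul_sum,
        Finset.mul_sum, ← Finset.sum_add_distrib, ← Finset.sum_add_distrib,
        ← Finset.sum_add_distrib]
      exact Finset.sum_congr rfl fun p _ => by push_cast; ring
    rw [htotal]
    have hkb := key_bound_s15 (Wᴴ * T * W) hT2psd
      (⟨fun x => ((x.1, x.2.1), x.2.2), fun q => (q.1.1, (q.1.2, q.2)),
        fun _ => rfl, fun _ => rfl⟩ : Fin d × (Fin d × Fin d) ≃ (Fin d × Fin d) × Fin d)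
      A₁ A₂ hA₁ hA₂ hnA₁ hnA₂
      (fun p => γ₁₁ * hB₁.eigenvalues p.1 + γ₁₂ * hB₂.eigenvalues p.2)
      (fun p => γ₂₁ * hB₁.eigenvalues p.1 + γ₂₂ * hB₂.eigenvalues p.2)
      (fun p => scalar_bound γ₁₁ γ₁₂ γ₂₁ γ₂₂ (hB₁.eigenvalues p.1) (hB₂.eigenvalues p.2)
        hγ₁₁ hγ₁₂ hγ₂₁ hγ₂₂
        (eigenvalues_abs_le hB₁ hnB₁ p.1) (eigenvalues_abs_le hB₂ hnB₂ p.2) hγ)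
    calc ‖_‖ ≤ 2 * (Wᴴ * T * W).trace.re := hkb
      _ = 2 := by rw [htrT2]; norm_num
  · -- Case T₁₁₂ : diagonalize A₁ (slot 1) and A₂ (slot 2)
    set U1 : Matrix (Fin d) (Fin d) ℂ := (hA₁.eigenvectorUnitary : Matrix (Fin d) (Fin d) ℂ) with hU1def
    set U2 : Matrix (Fin d) (Fin d) ℂ := (hA₂.eigenvectorUnitary : Matrix (Fin d) (Fin d) ℂ) with hU2def
    have hU1a : U1 * U1ᴴ = 1 := by
      have := hA₁.eigenvectorUnitary.2
      rw [Matrix.mem_unitaryGroup_iff] at this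
      simpa [Matrix.star_eq_conjTranspose] using this
    have hU2a : U2 * U2ᴴ = 1 := by
      have := hA₂.eigenvectorUnitary.2
      rw [Matrix.mem_unitaryGroup_iff] at this
      simpa [Matrix.star_eq_conjTranspose] using this
    set E1 : Matrix (Fin d) (Fin d) ℂ :=
      Matrix.diagonal (fun j => ((hA₁.eigenvalues j : ℝ) : ℂ)) with hE1
    set E2 : Matrix (Fin d) (Fin d) ℂ :=
      Matrix.diagonal (fun j => ((hA₂.eigenvalues j : ℝ) : ℂ)) with hE2
    have hspec1 : A₁ = U1 * E1 * U1ᴴ := by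
      rw [hE1, hU1def]
      simpa [Matrix.star_eq_conjTranspose, Function.comp_def] using hA₁.spectral_theorem
    have hspec2 : A₂ = U2 * E2 * U2ᴴ := by
      rw [hE2, hU2def]
      simpa [Matrix.star_eq_conjTranspose, Function.comp_def] using hA₂.spectral_theorem
    set W : Matrix ((Fin d × Fin d) × Fin d) ((Fin d × Fin d) × Fin d) ℂ :=
      (U1 ⊗ₖ U2) ⊗ₖ (1 : Matrix (Fin d) (Fin d) ℂ) with hW
    have hWH : Wᴴ = (U1ᴴ ⊗ₖ U2ᴴ) ⊗ₖ (1 : Matrix (Fin d) (Fin d) ℂ) := by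
      rw [hW, kron_conjT, kron_conjT, Matrix.conjTranspose_one]
    have hWW : W * Wᴴ = 1 := by
      rw [hWH, hW, ← Matrix.mul_kronecker_mul, ← Matrix.mul_kronecker_mul, one_mul,
        hU1a, hU2a, Matrix.one_kronecker_one, Matrix.one_kronecker_one]
    have hT2psd : (Wᴴ * S * W).PosSemidef := hSpsd.conjTranspose_mul_mul_same W
    have htrS : S.trace = 1 := by
      have h2 := trace_slot2 S (1 : Matrix (Fin d) (Fin d) ℂ) (1 : Matrix (Fin d) (Fin d) ℂ)
      simp only [Matrix.one_kronecker_one, Matrix.mul_one, hptr2] at h2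
      exact h2.trans hρtr
    have htrT2 : (Wᴴ * S * W).trace = 1 := by
      have h := trace_conj S W 1
      rw [Matrix.mul_one, Matrix.mul_one, hWW, Matrix.mul_one] at h
      exact h.trans htrS
    have key1 : ∀ B : Matrix (Fin d) (Fin d) ℂ,
        (ρ * (A₁ ⊗ₖ B)).trace = ∑ p : Fin d × Fin d, ((hA₁.eigenvalues p.1 : ℝ) : ℂ)
          * (((Wᴴ * S * W).submatrix (fun i => ((p.1, p.2), i)) (fun i => ((p.1, p.2), i))
              * B).trace) := by
      intro B
      rw [← hptr2, ← trace_slot2]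
      have hX : W * ((E1 ⊗ₖ (1 : Matrix (Fin d) (Fin d) ℂ)) ⊗ₖ B) * Wᴴ
          = (A₁ ⊗ₖ (1 : Matrix (Fin d) (Fin d) ℂ)) ⊗ₖ B := by
        rw [hWH, hW]
        simp only [← Matrix.mul_kronecker_mul]
        rw [one_mul, mul_one, mul_one, hU2a, ← hspec1]
      rw [← hX, ← trace_conj, hE1,
        show (1 : Matrix (Fin d) (Fin d) ℂ) = Matrix.diagonal (fun _ => (1 : ℂ)) from
          Matrix.diagonal_one.symm,
        trace_block112, Fintype.sum_prod_type]
      exact Finset.sum_congr rfl fun j _ => Finset.sum_congr rfl fun k _ => by simp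
    have key2 : ∀ B : Matrix (Fin d) (Fin d) ℂ,
        (ρ * (A₂ ⊗ₖ B)).trace = ∑ p : Fin d × Fin d, ((hA₂.eigenvalues p.2 : ℝ) : ℂ)
          * (((Wᴴ * S * W).submatrix (fun i => ((p.1, p.2), i)) (fun i => ((p.1, p.2), i))
              * B).trace) := by
      intro B
      rw [← hptr1, ← trace_slot1]
      have hX : W * (((1 : Matrix (Fin d) (Fin d) ℂ) ⊗ₖ E2) ⊗ₖ B) * Wᴴ
          = ((1 : Matrix (Fin d) (Fin d) ℂ) ⊗ₖ A₂) ⊗ₖ B := by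
        rw [hWH, hW]
        simp only [← Matrix.mul_kronecker_mul]
        rw [one_mul, mul_one, mul_one, hU1a, ← hspec2]
      rw [← hX, ← trace_conj, hE2,
        show (1 : Matrix (Fin d) (Fin d) ℂ) = Matrix.diagonal (fun _ => (1 : ℂ)) from
          Matrix.diagonal_one.symm,
        trace_block112, Fintype.sum_prod_type]
      exact Finset.sum_congr rfl fun j _ => Finset.sum_congr rfl fun k _ => by simp
    have htotal : (γ₁₁ : ℂ) * (ρ * (A₁ ⊗ₖ B₁)).trace + (γ₁₂ : ℂ) * (ρ * (A₁ ⊗ₖ B₂)).trace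
        + (γ₂₁ : ℂ) * (ρ * (A₂ ⊗ₖ B₁)).trace + (γ₂₂ : ℂ) * (ρ * (A₂ ⊗ₖ B₂)).trace
        = ∑ p : Fin d × Fin d,
          (((γ₁₁ * hA₁.eigenvalues p.1 + γ₂₁ * hA₂.eigenvalues p.2 : ℝ) : ℂ)
            * (((Wᴴ * S * W).submatrix (fun i => ((p.1, p.2), i)) (fun i => ((p.1, p.2), i))
                * B₁).trace)
          + ((γ₁₂ * hA₁.eigenvalues p.1 + γ₂₂ * hA₂.eigenvalues p.2 : ℝ) : ℂ)
            * (((Wᴴ * S * W).submatrix (fun i => ((p.1, p.2), i)) (fun i => ((p.1, p.2), i))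
                * B₂).trace)) := by
      rw [key1 B₁, key2 B₁, key1 B₂, key2 B₂, Finset.mul_sum, Finset.mul_sum, Finset.mul_sum,
        Finset.mul_sum, ← Finset.sum_add_distrib, ← Finset.sum_add_distrib,
        ← Finset.sum_add_distrib]
      exact Finset.sum_congr rfl fun p _ => by push_cast; ring
    rw [htotal]
    have hkb := key_bound_s15 (Wᴴ * S * W) hT2psd
      (⟨fun x => ((x.2.1, x.2.2), x.1), fun q => (q.2, (q.1.1, q.1.2)),
        fun _ => rfl, fun _ => rfl⟩ : Fin d × (Fin d × Fin d) ≃ (Fin d × Fin d) × Fin d)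
      B₁ B₂ hB₁ hB₂ hnB₁ hnB₂
      (fun p => γ₁₁ * hA₁.eigenvalues p.1 + γ₂₁ * hA₂.eigenvalues p.2)
      (fun p => γ₁₂ * hA₁.eigenvalues p.1 + γ₂₂ * hA₂.eigenvalues p.2)
      (fun p => scalar_bound γ₁₁ γ₂₁ γ₁₂ γ₂₂ (hA₁.eigenvalues p.1) (hA₂.eigenvalues p.2)
        hγ₁₁ hγ₂₁ hγ₁₂ hγ₂₂
        (eigenvalues_abs_le hA₁ hnA₁ p.1) (eigenvalues_abs_le hA₂ hnA₂ p.2) hγ.symm)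
    calc ‖_‖ ≤ 2 * (Wᴴ * S * W).trace.re := hkb
      _ = 2 := by rw [htrT2]; norm_num
end BellPaper
end
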